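/- Let α ∈ (0, 2] with α ≠ 1, β ∈ [−1, 1], a ∈ ℝ, and let θ, A be reals with 0 < A < θ and a ∉ [θ − A, θ + A]. For each γ > 0 let μ_γ be a probability measure on ℝ whose characteristic function satisfies, for all ω ∈ ℝ, φ_{μ_γ}(ω) = exp( i·a·ω − γ·|ω|^α·(1 + i·β·sign(ω)·tan(απ/2)) ). Let qX, qZ, qXZ be nonnegative reals with qX + qZ + qXZ = 1, set P_γ = μ_γ((θ − A, θ + A)) and F_γ = 1/2 + P_γ·(qX + qZ + qXZ·P_γ)/2. Then P_γ → 0 and F_γ → 1/2 as γ → 0⁺. -/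

import Mathlib

open MeasureTheory Filter Set

/-- If-part of the infinite-variance (alpha-stable, `α ≠ 1`) forbidden-interval
theorem: if the location `a` lies outside the forbidden interval
`[θ − A, θ + A]`, then as the dispersion `γ → 0⁺` the detection parameter
`P_γ` tends to `0` and the teleportation fidelity tends to `1/2`. -/
theorem forbidden_interval_alpha_stable_if
    (α β a : ℝ) (hα : α ∈ Ioc (0 : ℝ) 2) (hα1 : α ≠ 1)
    (hβ : β ∈ Icc (-1 : ℝ) 1)
    (θ A : ℝ) (hA : 0 < A) (hAθ : A < θ)
    (ha : a ∉ Icc (θ - A) (θ + A))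
    (μ : ℝ → Measure ℝ) (hprob : ∀ γ, 0 < γ → IsProbabilityMeasure (μ γ))
    (hchar : ∀ γ, 0 < γ → ∀ ω : ℝ,
      ∫ x, Complex.exp (Complex.I * ω * x) ∂(μ γ)
        = Complex.exp (Complex.I * a * ω -
            (γ : ℂ) * ((|ω| ^ α : ℝ) : ℂ) *
              (1 + Complex.I * (β : ℂ) * ((Real.sign ω : ℝ) : ℂ) *
                ((Real.tan (α * Real.pi / 2) : ℝ) : ℂ))))
    (qX qZ qXZ : ℝ) (hqX : 0 ≤ qX) (hqZ : 0 ≤ qZ) (hqXZ : 0 ≤ qXZ)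
    (hsum : qX + qZ + qXZ = 1) :
    Tendsto (fun γ => ((μ γ) (Ioo (θ - A) (θ + A))).toReal)
      (nhdsWithin 0 (Ioi 0)) (nhds 0) ∧
    Tendsto (fun γ =>
        1 / 2 + ((μ γ) (Ioo (θ - A) (θ + A))).toReal *
          (qX + qZ + qXZ * ((μ γ) (Ioo (θ - A) (θ + A))).toReal) / 2)
      (nhdsWithin 0 (Ioi 0)) (nhds (1 / 2)) := by
  rw [mem_Icc] at ha
  push_neg at ha
  set I : Set ℝ := Ioo (θ - A) (θ + A) with hI
  have hθI : θ ∈ I := ⟨by linarith, by linarith⟩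
  -- distance bounds from `a` on the interval
  obtain ⟨d, hd0, hdI⟩ : ∃ d, 0 < d ∧ ∀ x ∈ I, d ≤ |x - a| := by
    rcases lt_or_ge a (θ - A) with h | h
    · exact ⟨θ - A - a, by linarith, fun x hx =>
        le_trans (by have := hx.1; linarith [le_abs_self (x - a)] : θ - A - a ≤ x - a)
          (le_abs_self _) |>.trans le_rfl⟩
    · have h' : θ + A < a := ha h
      exact ⟨a - (θ + A), by linarith, fun x hx => by
        have : a - (θ + A) ≤ -(x - a) := by have := hx.2; linarith
        exact this.trans (neg_le_abs _)⟩
  set D : ℝ := |θ - a| + A with hD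
  have hDpos : 0 < D := by positivity
  have hDI : ∀ x ∈ I, |x - a| ≤ D := by
    intro x hx
    calc |x - a| ≤ |x - θ| + |θ - a| := abs_sub_le x θ a
      _ ≤ A + |θ - a| := by
          have : |x - θ| ≤ A := abs_le.mpr ⟨by linarith [hx.1], by linarith [hx.2]⟩
          linarith
      _ = D := by rw [hD]; ring
  have hdD : d ≤ D := (hdI θ hθI).trans (hDI θ hθI)
  set ω0 : ℝ := Real.pi / D with hω0def
  have hω0 : 0 < ω0 := div_pos Real.pi_pos hDpos
  set c : ℝ := 1 - Real.cos (ω0 * d) with hc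
  have hωd_pos : 0 < ω0 * d := mul_pos hω0 hd0
  have hωd_le : ω0 * d ≤ Real.pi := by
    rw [hω0def]
    rw [div_mul_eq_mul_div, div_le_iff₀ hDpos]
    nlinarith [Real.pi_pos]
  have hcpos : 0 < c := by
    have := Real.cos_lt_cos_of_nonneg_of_le_pi le_rfl hωd_le hωd_pos
    simp only [Real.cos_zero] at this
    rw [hc]; linarith
  -- pointwise lower bound on the forbidden interval
  have hcos_bound : ∀ x ∈ I, c ≤ 1 - Real.cos (ω0 * (x - a)) := by
    intro x hx
    have h1 : |ω0 * (x - a)| = ω0 * |x - a| := by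
      rw [abs_mul, abs_of_pos hω0]
    have h2 : ω0 * d ≤ |ω0 * (x - a)| := by
      rw [h1]; exact mul_le_mul_of_nonneg_left (hdI x hx) hω0.le
    have h3 : |ω0 * (x - a)| ≤ Real.pi := by
      rw [h1, hω0def]
      rw [div_mul_eq_mul_div, div_le_iff₀ hDpos]
      nlinarith [hDI x hx, Real.pi_pos, abs_nonneg (x - a)]
    have := Real.cos_le_cos_of_nonneg_of_le_pi hωd_pos.le h3 h2
    rw [Real.cos_abs] at this
    rw [hc]; linarith
  -- the real part of the limit characteristic value
  set Z : ℂ := 1 + Complex.I * (β : ℂ) * ((Real.tan (α * Real.pi / 2) : ℝ) : ℂ) with hZ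
  set tC : ℂ := ((|ω0| ^ α : ℝ) : ℂ) with htC
  set h : ℝ → ℝ := fun γ => (Complex.exp (-(γ : ℂ) * tC * Z)).re with hh
  -- the key bound for each positive dispersion
  have hPle : ∀ γ ∈ Ioi (0 : ℝ), ((μ γ) I).toReal ≤ (1 - h γ) / c := by
    intro γ hγ
    haveI := hprob γ hγ
    have hic : Integrable (fun x : ℝ => Complex.exp (Complex.I * ω0 * x)) (μ γ) := by
      refine Integrable.mono' (integrable_const 1) ?_ ?_
      · exact (Continuous.aestronglyMeasurable (by fun_prop))
      · refine ae_of_all _ fun x => ?_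
        have : Complex.I * (ω0 : ℂ) * (x : ℂ) = ((ω0 * x : ℝ) : ℂ) * Complex.I := by
          push_cast; ring
        rw [this]
        simp [Complex.norm_exp]
    have hicr : Integrable (fun x : ℝ => Real.cos (ω0 * (x - a))) (μ γ) := by
      refine Integrable.mono' (integrable_const 1) ?_ ?_
      · exact (Continuous.aestronglyMeasurable (by fun_prop))
      · exact ae_of_all _ fun x => by
          simpa using Real.abs_cos_le_one (ω0 * (x - a))
    -- compute the integral of cosine via the characteristic function
    have hcos_int : ∫ x, Real.cos (ω0 * (x - a)) ∂(μ γ) = h γ := by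
      have heq : ∀ x : ℝ, Real.cos (ω0 * (x - a))
          = (Complex.exp (Complex.I * ω0 * x) * Complex.exp (-(Complex.I * a * ω0))).re := by
        intro x
        rw [← Complex.exp_add]
        have : Complex.I * (ω0 : ℂ) * (x : ℂ) + -(Complex.I * (a : ℂ) * (ω0 : ℂ))
            = ((ω0 * (x - a) : ℝ) : ℂ) * Complex.I := by push_cast; ring
        rw [this, Complex.exp_ofReal_mul_I_re]
      calc ∫ x, Real.cos (ω0 * (x - a)) ∂(μ γ)
          = ∫ x, (Complex.exp (Complex.I * ω0 * x) * Complex.exp (-(Complex.I * a * ω0))).re ∂(μ γ) := by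
            simp_rw [heq]
        _ = ((∫ x, Complex.exp (Complex.I * ω0 * x) * Complex.exp (-(Complex.I * a * ω0)) ∂(μ γ))).re := by
            rw [← RCLike.re_to_complex]
            exact integral_re (hic.mul_const _)
        _ = ((∫ x, Complex.exp (Complex.I * ω0 * x) ∂(μ γ)) * Complex.exp (-(Complex.I * a * ω0))).re := by
            rw [integral_mul_const]
        _ = h γ := by
            rw [hchar γ hγ ω0, Real.sign_of_pos hω0, ← Complex.exp_add]
            congr 2
            rw [htC, hZ]
            push_cast
            ring
    -- lower bound the integral over the interval
    have hf_int : Integrable (fun x : ℝ => 1 - Real.cos (ω0 * (x - a))) (μ γ) :=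
      (integrable_const 1).sub hicr
    have hnonneg : ∀ x : ℝ, 0 ≤ 1 - Real.cos (ω0 * (x - a)) := fun x => by
      linarith [Real.cos_le_one (ω0 * (x - a))]
    have h1 : c * ((μ γ) I).toReal ≤ ∫ x in I, (1 - Real.cos (ω0 * (x - a))) ∂(μ γ) :=
      by have := setIntegral_ge_of_const_le measurableSet_Ioo (measure_ne_top _ _) hcos_bound
           (hf_int.integrableOn)
         rw [smul_eq_mul, mul_comm] at this; exact this
    have h2 : ∫ x in I, (1 - Real.cos (ω0 * (x - a))) ∂(μ γ)
        ≤ ∫ x, (1 - Real.cos (ω0 * (x - a))) ∂(μ γ) :=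
      setIntegral_le_integral hf_int (ae_of_all _ hnonneg)
    have h3 : ∫ x, (1 - Real.cos (ω0 * (x - a))) ∂(μ γ) = 1 - h γ := by
      rw [integral_sub (integrable_const 1) hicr, hcos_int]
      simp
    rw [le_div_iff₀ hcpos, mul_comm]
    calc c * ((μ γ) I).toReal ≤ ∫ x in I, (1 - Real.cos (ω0 * (x - a))) ∂(μ γ) := h1
      _ ≤ 1 - h γ := h3 ▸ h2
  -- h tends to 1 as γ → 0
  have hhcont : Continuous h := by
    rw [hh]
    exact Complex.continuous_re.comp (Complex.continuous_exp.comp (by fun_prop))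
  have hh0 : h 0 = 1 := by simp [hh]
  have hhlim : Tendsto h (nhdsWithin 0 (Ioi 0)) (nhds 1) := by
    rw [← hh0]
    exact (hhcont.tendsto 0).mono_left nhdsWithin_le_nhds
  have hglim : Tendsto (fun γ => (1 - h γ) / c) (nhdsWithin 0 (Ioi 0)) (nhds 0) := by
    have : Tendsto (fun γ => (1 - h γ) / c) (nhdsWithin 0 (Ioi 0)) (nhds ((1 - 1) / c)) :=
      (tendsto_const_nhds.sub hhlim).div_const c
    simpa using this
  have hP : Tendsto (fun γ => ((μ γ) I).toReal) (nhdsWithin 0 (Ioi 0)) (nhds 0) := by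
    refine squeeze_zero' ?_ ?_ hglim
    · exact eventually_nhdsWithin_of_forall fun γ _ => ENNReal.toReal_nonneg
    · exact eventually_nhdsWithin_of_forall hPle
  refine ⟨hP, ?_⟩
  have : Tendsto (fun γ =>
      1 / 2 + ((μ γ) I).toReal * (qX + qZ + qXZ * ((μ γ) I).toReal) / 2)
      (nhdsWithin 0 (Ioi 0))
      (nhds (1 / 2 + 0 * (qX + qZ + qXZ * 0) / 2)) := by
    exact tendsto_const_nhds.add
      ((hP.mul (tendsto_const_nhds.add (tendsto_const_nhds.mul hP))).div_const 2)
  simpa using this
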